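/- Let X be a random variable with continuous distribution function F_X whose support has infimum t_0 and supremum t_K, and let T be a pcsm function with change points (t_k)_{k=0}^K, K ∈ ℕ ∪ {∞}. Then the W-transform 𝒲 of F_X and T is uniformity-preserving: if U ∼ U(0,1), then 𝒲(U) ∼ U(0,1). -/

import Mathlib

open MeasureTheory Set

/-- The distribution function of a measure on `ℝ`. -/
noncomputable def distFun (μ : Measure ℝ) : ℝ → ℝ := fun x => (μ (Set.Iic x)).toReal

/-- The (generalised) quantile function of a distribution function. -/
noncomputable def quantileFun (F : ℝ → ℝ) : ℝ → ℝ := fun u => sInf {x : ℝ | u ≤ F x}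

/-- The support of a distribution function `F`:
`{x : F(x) - F(x-h) > 0 for all h > 0}`. -/
def suppSet (F : ℝ → ℝ) : Set ℝ := {x : ℝ | ∀ h > 0, 0 < F x - F (x - h)}

/-- The `k`-th open piece `(t_{k-1}, t_k)` determined by (extended-real) change points. -/
def pieceO (t : ℕ → EReal) (k : ℕ) : Set ℝ :=
  {x : ℝ | t (k - 1) < (x : EReal) ∧ (x : EReal) < t k}

/-- The uniform distribution on `(0,1]`, i.e. the `U(0,1)` law. -/
noncomputable def unif01 : Measure ℝ := volume.restrict (Set.Ioc (0 : ℝ) 1)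

open Filter Topology

namespace WAux

variable (μ : Measure ℝ)

lemma distFun_mono [IsFiniteMeasure μ] : Monotone (distFun μ) := fun x y h =>
  ENNReal.toReal_mono (measure_ne_top μ _) (measure_mono (Iic_subset_Iic.2 h))

lemma measure_Iic_eq [IsFiniteMeasure μ] (x : ℝ) :
    μ (Iic x) = ENNReal.ofReal (distFun μ x) :=
  (ENNReal.ofReal_toReal (measure_ne_top μ _)).symm

lemma distFun_nonneg (x : ℝ) : 0 ≤ distFun μ x := ENNReal.toReal_nonneg

lemma distFun_le_one [IsProbabilityMeasure μ] (x : ℝ) : distFun μ x ≤ 1 := by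
  have h := ENNReal.toReal_mono (measure_ne_top μ univ) (measure_mono (subset_univ (Iic x)))
  simpa [distFun] using h

lemma distFun_eq_cdf [IsProbabilityMeasure μ] : ⇑(ProbabilityTheory.cdf μ) = distFun μ :=
  funext fun x => by rw [ProbabilityTheory.cdf_eq_real, measureReal_def]; rfl

lemma measure_singleton_eq_zero [IsProbabilityMeasure μ]
    (hc : Continuous (distFun μ)) (x : ℝ) : μ {x} = 0 := by
  have h1 : μ {x} = ENNReal.ofReal (distFun μ x - Function.leftLim (distFun μ) x) := by
    conv_lhs => rw [← ProbabilityTheory.measure_cdf (μ := μ)]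
    rw [StieltjesFunction.measure_singleton, distFun_eq_cdf]
  have h2 : Function.leftLim (distFun μ) x = distFun μ x :=
    ((distFun_mono μ).continuousWithinAt_Iio_iff_leftLim_eq).1
      (hc.continuousAt.continuousWithinAt)
  rw [h1, h2, sub_self, ENNReal.ofReal_zero]

lemma continuous_distFun [IsProbabilityMeasure μ]
    (h : ∀ x, μ {x} = 0) : Continuous (distFun μ) := by
  rw [continuous_iff_continuousAt]
  intro x
  apply ((distFun_mono μ).continuousAt_iff_leftLim_eq_rightLim).2
  have hr : Function.rightLim (distFun μ) x = distFun μ x := by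
    rw [← distFun_eq_cdf]; exact (ProbabilityTheory.cdf μ).rightLim_eq x
  have hl : Function.leftLim (distFun μ) x = distFun μ x := by
    have h1 : μ {x} = ENNReal.ofReal (distFun μ x - Function.leftLim (distFun μ) x) := by
      conv_lhs => rw [← ProbabilityTheory.measure_cdf (μ := μ)]
      rw [StieltjesFunction.measure_singleton, distFun_eq_cdf]
    rw [h x] at h1
    have h2 : distFun μ x - Function.leftLim (distFun μ) x ≤ 0 :=
      ENNReal.ofReal_eq_zero.1 h1.symm
    have h3 : Function.leftLim (distFun μ) x ≤ distFun μ x :=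
      (distFun_mono μ).leftLim_le le_rfl
    linarith
  rw [hl, hr]

lemma exists_distFun_lt [IsProbabilityMeasure μ] {u : ℝ} (hu : 0 < u) :
    ∃ y : ℝ, distFun μ y < u := by
  have hI : (⋂ n : ℕ, Iic (-(n:ℝ))) = ∅ := by
    ext x
    simp only [mem_iInter, mem_Iic, mem_empty_iff_false, iff_false, not_forall, not_le]
    obtain ⟨n, hn⟩ := exists_nat_gt (-x)
    exact ⟨n, by linarith⟩
  have h := tendsto_measure_iInter_atTop (μ := μ) (s := fun n : ℕ => Iic (-(n:ℝ)))
    (fun n => (measurableSet_Iic).nullMeasurableSet)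
    (fun m n hmn => Iic_subset_Iic.2 (by exact_mod_cast neg_le_neg (Nat.cast_le.2 hmn)))
    ⟨0, measure_ne_top μ _⟩
  rw [hI] at h
  simp only [measure_empty] at h
  have := (ENNReal.tendsto_toReal (by simp)).comp h
  have h2 : Tendsto (fun n : ℕ => distFun μ (-(n:ℝ))) atTop (𝓝 0) := by
    simpa [Function.comp_def, distFun] using this
  obtain ⟨n, hn⟩ := (h2.eventually (eventually_lt_nhds hu)).exists
  exact ⟨-(n:ℝ), hn⟩

lemma exists_lt_distFun [IsProbabilityMeasure μ] {u : ℝ} (hu : u < 1) :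
    ∃ y : ℝ, u < distFun μ y := by
  have h := (ENNReal.tendsto_toReal (by simp : μ univ ≠ ⊤)).comp
    (tendsto_measure_Iic_atTop μ)
  have h2 : Tendsto (distFun μ) atTop (𝓝 1) := by
    show Tendsto (fun x => (μ (Iic x)).toReal) atTop (𝓝 1)
    simpa [Function.comp_def, distFun, measure_univ] using h
  obtain ⟨y, hy⟩ := (h2.eventually (eventually_gt_nhds hu)).exists
  exact ⟨y, hy⟩

instance : IsProbabilityMeasure unif01 := by
  constructor
  rw [unif01, Measure.restrict_apply_univ, Real.volume_Ioc]
  norm_num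

lemma unif01_apply (s : Set ℝ) (hs : MeasurableSet s) :
    unif01 s = volume (s ∩ Ioc (0:ℝ) 1) := Measure.restrict_apply hs

/-- Probability integral transform. -/
lemma map_distFun_eq_unif01 [IsProbabilityMeasure μ]
    (hc : Continuous (distFun μ)) : μ.map (distFun μ) = unif01 := by
  set G := distFun μ with hG
  have hGmeas : Measurable G := hc.measurable
  haveI : IsProbabilityMeasure (μ.map G) := Measure.isProbabilityMeasure_map hGmeas.aemeasurable
  refine Measure.ext_of_Iic (μ.map G) unif01 (fun u => ?_)
  rw [Measure.map_apply hGmeas measurableSet_Iic, unif01_apply _ measurableSet_Iic]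
  rcases lt_or_ge u 0 with hu | hu
  · have h1 : G ⁻¹' Iic u = ∅ := by
      ext x; simp only [mem_preimage, mem_Iic, mem_empty_iff_false, iff_false, not_le]
      exact lt_of_lt_of_le hu (distFun_nonneg μ x)
    have h2 : Iic u ∩ Ioc (0:ℝ) 1 = ∅ := by
      ext x; simp only [mem_inter_iff, mem_Iic, mem_Ioc, mem_empty_iff_false, iff_false]
      rintro ⟨h3, h4, -⟩; linarith
    rw [h1, h2]
    simp
  rcases lt_or_ge u 1 with hu1 | hu1
  · have h2 : Iic u ∩ Ioc (0:ℝ) 1 = Ioc 0 u := by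
      ext x; simp only [mem_inter_iff, mem_Iic, mem_Ioc]
      constructor
      · rintro ⟨h3, h4, h5⟩; exact ⟨h4, h3⟩
      · rintro ⟨h3, h4⟩; exact ⟨h4, h3, h4.trans (hu1.le)⟩
    rw [h2, Real.volume_Ioc, sub_zero]
    rcases eq_empty_or_nonempty (G ⁻¹' Iic u) with he | hne
    · rw [he]
      have hu0 : u = 0 := by
        refine le_antisymm ?_ hu
        by_contra h
        push_neg at h
        obtain ⟨y, hy⟩ := exists_distFun_lt μ h
        exact (eq_empty_iff_forall_notMem.1 he y) (mem_preimage.2 (mem_Iic.2 hy.le))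
      simp [hu0]
    · obtain ⟨x₀, hx₀⟩ := exists_lt_distFun μ hu1
      have hS : G ⁻¹' Iic u ⊆ Iic x₀ := by
        intro y hy
        simp only [mem_preimage, mem_Iic] at hy ⊢
        by_contra h
        push_neg at h
        exact absurd ((distFun_mono μ h.le).trans hy) (not_le.2 hx₀)
      have hbdd : BddAbove (G ⁻¹' Iic u) := ⟨x₀, hS⟩
      have hclosed : IsClosed (G ⁻¹' Iic u) := isClosed_Iic.preimage hc
      set m := sSup (G ⁻¹' Iic u) with hm
      have hmem : m ∈ G ⁻¹' Iic u := hclosed.csSup_mem hne hbdd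
      have hSeq : G ⁻¹' Iic u = Iic m := by
        apply Subset.antisymm (fun y hy => le_csSup hbdd hy)
        intro y hy
        exact mem_preimage.2 (mem_Iic.2 ((distFun_mono μ hy).trans hmem))
      have hGm : G m = u := by
        refine le_antisymm hmem ?_
        refine ge_of_tendsto (hc.continuousAt.tendsto.mono_left
          (nhdsWithin_le_nhds (s := Ioi m))) ?_
        filter_upwards [self_mem_nhdsWithin] with y hy
        by_contra h
        push_neg at h
        have : y ∈ Iic m := hSeq ▸ (mem_preimage.2 (mem_Iic.2 h.le))
        exact absurd (mem_Iic.1 this) (not_le.2 (mem_Ioi.1 hy))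
      rw [hSeq, measure_Iic_eq]
      rw [hG] at hGm
      rw [hGm]
  · have h1 : G ⁻¹' Iic u = univ := by
      ext x
      simp only [mem_preimage, mem_Iic, mem_univ, iff_true]
      exact (distFun_le_one μ x).trans hu1
    have h2 : Iic u ∩ Ioc (0:ℝ) 1 = Ioc 0 1 := by
      apply inter_eq_self_of_subset_right
      intro x hx; exact mem_Iic.2 (hx.2.trans hu1)
    rw [h1, h2, Real.volume_Ioc, measure_univ]
    norm_num

lemma quantile_le_iff [IsProbabilityMeasure μ] (hc : Continuous (distFun μ))
    {u : ℝ} (hu : u ∈ Ioo (0:ℝ) 1) (x : ℝ) :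
    quantileFun (distFun μ) u ≤ x ↔ u ≤ distFun μ x := by
  set F := distFun μ with hF
  set S := {y : ℝ | u ≤ F y} with hSdef
  obtain ⟨y₀, hy₀⟩ := exists_distFun_lt μ hu.1
  have hbdd : BddBelow S := by
    refine ⟨y₀, fun y hy => ?_⟩
    by_contra h
    push_neg at h
    exact absurd (hy.trans (distFun_mono μ h.le)) (not_le.2 hy₀)
  obtain ⟨y₁, hy₁⟩ := exists_lt_distFun μ hu.2
  have hne : S.Nonempty := ⟨y₁, hy₁.le⟩
  have hclosed : IsClosed S := isClosed_Ici.preimage hc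
  have hmem : sInf S ∈ S := hclosed.csInf_mem hne hbdd
  constructor
  · intro h
    exact hmem.trans (distFun_mono μ h)
  · intro h
    exact csInf_le hbdd h

/-- The measurable modification of the quantile function. -/
noncomputable def quantMod (μ : Measure ℝ) : ℝ → ℝ :=
  (Ioo (0:ℝ) 1).piecewise (quantileFun (distFun μ)) 0

lemma quantMod_preimage [IsProbabilityMeasure μ] (hc : Continuous (distFun μ)) (x : ℝ) :
    quantMod μ ⁻¹' Iic x =
      (Ioo (0:ℝ) 1 ∩ Iic (distFun μ x)) ∪ ((Ioo (0:ℝ) 1)ᶜ ∩ {u : ℝ | (0:ℝ) ≤ x}) := by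
  ext u
  by_cases hu : u ∈ Ioo (0:ℝ) 1
  · simp only [mem_preimage, mem_Iic, quantMod, Set.piecewise_eq_of_mem _ _ _ hu,
      mem_union, mem_inter_iff, hu, true_and, mem_compl_iff, not_true_eq_false, false_and,
      or_false, quantile_le_iff μ hc hu x]
  · simp only [mem_preimage, mem_Iic, quantMod, Set.piecewise_eq_of_notMem _ _ _ hu,
      mem_union, mem_inter_iff, hu, false_and, false_or, mem_compl_iff, not_false_iff, true_and,
      mem_setOf_eq, Pi.zero_apply]

lemma quantMod_measurable [IsProbabilityMeasure μ] (hc : Continuous (distFun μ)) :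
    Measurable (quantMod μ) := by
  apply measurable_of_Iic
  intro x
  rw [quantMod_preimage μ hc]
  refine (measurableSet_Ioo.inter measurableSet_Iic).union
    (measurableSet_Ioo.compl.inter ?_)
  rcases le_or_gt (0:ℝ) x with h | h
  · have : {u : ℝ | (0:ℝ) ≤ x} = univ := eq_univ_of_forall fun _ => h
    rw [this]; exact MeasurableSet.univ
  · have : {u : ℝ | (0:ℝ) ≤ x} = ∅ := eq_empty_of_forall_notMem fun _ h2 => absurd h2 (not_le.2 h)
    rw [this]; exact MeasurableSet.empty

lemma map_quantMod [IsProbabilityMeasure μ] (hc : Continuous (distFun μ)) :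
    unif01.map (quantMod μ) = μ := by
  haveI : IsProbabilityMeasure (unif01.map (quantMod μ)) :=
    Measure.isProbabilityMeasure_map (quantMod_measurable μ hc).aemeasurable
  refine Measure.ext_of_Iic _ _ (fun x => ?_)
  rw [Measure.map_apply (quantMod_measurable μ hc) measurableSet_Iic,
    unif01_apply _ ((quantMod_measurable μ hc) measurableSet_Iic), quantMod_preimage μ hc,
    measure_Iic_eq]
  have hF0 : 0 ≤ distFun μ x := distFun_nonneg μ x
  have hF1 : distFun μ x ≤ 1 := distFun_le_one μ x
  have hae : (((Ioo (0:ℝ) 1 ∩ Iic (distFun μ x)) ∪ ((Ioo (0:ℝ) 1)ᶜ ∩ {u : ℝ | (0:ℝ) ≤ x}))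
      ∩ Ioc (0:ℝ) 1 : Set ℝ) =ᵐ[volume] (Ioo (0:ℝ) 1 ∩ Iic (distFun μ x) : Set ℝ) := by
    have hsub : (((Ioo (0:ℝ) 1 ∩ Iic (distFun μ x)) ∪ ((Ioo (0:ℝ) 1)ᶜ ∩ {u : ℝ | (0:ℝ) ≤ x}))
        ∩ Ioc (0:ℝ) 1) \ (Ioo (0:ℝ) 1 ∩ Iic (distFun μ x)) ⊆ {(1:ℝ)} := by
      rintro u ⟨⟨hu1, hu2⟩, hu3⟩
      rcases hu1 with h | h
      · exact absurd h hu3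
      · rcases eq_or_lt_of_le hu2.2 with he | hlt
        · exact he
        · exact absurd ⟨hu2.1, hlt⟩ h.1
    have hsub2 : (Ioo (0:ℝ) 1 ∩ Iic (distFun μ x)) \
        (((Ioo (0:ℝ) 1 ∩ Iic (distFun μ x)) ∪ ((Ioo (0:ℝ) 1)ᶜ ∩ {u : ℝ | (0:ℝ) ≤ x}))
          ∩ Ioc (0:ℝ) 1) = ∅ := by
      refine eq_empty_of_forall_notMem fun u ⟨hu1, hu2⟩ => hu2 ⟨Or.inl hu1, hu1.1.1, hu1.1.2.le⟩
    have h1 : volume ((((Ioo (0:ℝ) 1 ∩ Iic (distFun μ x)) ∪ ((Ioo (0:ℝ) 1)ᶜ ∩ {u : ℝ | (0:ℝ) ≤ x}))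
        ∩ Ioc (0:ℝ) 1) \ (Ioo (0:ℝ) 1 ∩ Iic (distFun μ x))) = 0 :=
      measure_mono_null hsub (measure_singleton 1)
    have h2 : volume ((Ioo (0:ℝ) 1 ∩ Iic (distFun μ x)) \
        (((Ioo (0:ℝ) 1 ∩ Iic (distFun μ x)) ∪ ((Ioo (0:ℝ) 1)ᶜ ∩ {u : ℝ | (0:ℝ) ≤ x}))
          ∩ Ioc (0:ℝ) 1)) = 0 := by rw [hsub2]; simp
    exact (MeasureTheory.ae_eq_set).2 ⟨h1, h2⟩
  rw [measure_congr hae]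
  rcases lt_or_ge (distFun μ x) 1 with h | h
  · have : Ioo (0:ℝ) 1 ∩ Iic (distFun μ x) = Ioc 0 (distFun μ x) := by
      ext u
      simp only [mem_inter_iff, mem_Ioo, mem_Iic, mem_Ioc]
      exact ⟨fun ⟨⟨a, b⟩, c⟩ => ⟨a, c⟩, fun ⟨a, b⟩ => ⟨⟨a, lt_of_le_of_lt b h⟩, b⟩⟩
    rw [this, Real.volume_Ioc, sub_zero]
  · have hx1 : distFun μ x = 1 := le_antisymm hF1 h
    have : Ioo (0:ℝ) 1 ∩ Iic (distFun μ x) = Ioo 0 1 := by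
      apply inter_eq_self_of_subset_left
      intro u hu; exact mem_Iic.2 (hu.2.le.trans (le_of_eq hx1.symm))
    rw [this, Real.volume_Ioo, sub_zero, hx1]

lemma measure_Ioc_eq [IsFiniteMeasure μ] {y x : ℝ} (h : y ≤ x) :
    μ (Ioc y x) = ENNReal.ofReal (distFun μ x - distFun μ y) := by
  rw [← (show Iic x \ Iic y = Ioc y x by ext z; simp only [mem_diff, mem_Iic, mem_Ioc, not_le]; tauto), measure_diff (Iic_subset_Iic.2 h) measurableSet_Iic.nullMeasurableSet
    (measure_ne_top μ _), measure_Iic_eq, measure_Iic_eq,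
    ENNReal.ofReal_sub _ (distFun_nonneg μ y)]

lemma suppSet_compl_null [IsProbabilityMeasure μ] [NullSingletonClass μ] :
    μ (suppSet (distFun μ))ᶜ = 0 := by
  set F := distFun μ with hF
  set S : ℚ → Set ℝ := fun q => {y : ℝ | (q:ℝ) < y ∧ μ (Ioc (q:ℝ) y) = 0} with hS
  have hcover : (suppSet F)ᶜ ⊆ ⋃ q : ℚ, S q := by
    intro x hx
    simp only [suppSet, mem_compl_iff, mem_setOf_eq, not_forall, not_lt, exists_prop] at hx
    obtain ⟨h, hh, hle⟩ := hx
    obtain ⟨q, hq1, hq2⟩ := exists_rat_btwn (show x - h < x by linarith)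
    have h0 : μ (Ioc (x - h) x) = 0 := by
      rw [measure_Ioc_eq μ (by linarith)]
      exact ENNReal.ofReal_eq_zero.2 hle
    refine mem_iUnion.2 ⟨q, hq2, measure_mono_null (Ioc_subset_Ioc_left hq1.le) h0⟩
  have hnull : ∀ q : ℚ, μ (S q) = 0 := by
    intro q
    set C : Set ℝ := ⋃ r : ℚ, ⋃ (_ : (r:ℝ) ∈ S q), Ioc (q:ℝ) (r:ℝ) with hC
    have hCnull : μ C = 0 := measure_iUnion_null fun r => measure_iUnion_null fun hr => hr.2
    have hsub : Set.Subsingleton (S q \ C) := by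
      have key : ∀ x ∈ S q \ C, ∀ y ∈ S q \ C, x < y → False := by
        rintro x ⟨hx, hxC⟩ y ⟨hy, _⟩ hxy
        obtain ⟨r, hr1, hr2⟩ := exists_rat_btwn hxy
        have hrS : (r:ℝ) ∈ S q := by
          refine ⟨hx.1.trans hr1, measure_mono_null (Ioc_subset_Ioc_right hr2.le) hy.2⟩
        exact hxC (mem_iUnion.2 ⟨r, mem_iUnion.2 ⟨hrS, hx.1, hr1.le⟩⟩)
      intro x hx y hy
      by_contra hne
      rcases Ne.lt_or_gt hne with h | h
      · exact key x hx y hy h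
      · exact key y hy x hx h
    have hsubnull : μ (S q \ C) = 0 := hsub.countable.measure_zero μ
    have : S q ⊆ C ∪ (S q \ C) := fun x hx => by
      by_cases hxc : x ∈ C
      · exact Or.inl hxc
      · exact Or.inr ⟨hx, hxc⟩
    exact measure_mono_null this (measure_union_null hCnull hsubnull)
  exact measure_mono_null hcover (measure_iUnion_null hnull)

end WAux


/-- If `F_X` is a continuous distribution function whose support has
infimum `t_0` and supremum `t_K`, and `T` is pcsm with change points `(t_k)_{k=0}^K`,
`K ∈ ℕ ∪ {∞}`, then the W-transform `𝒲` of `F_X` and `T` is uniformity-preserving: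
`U ∼ U(0,1)` implies `𝒲(U) ∼ U(0,1)`. -/
theorem w_transform_uniformity_preserving
    {Ω : Type*} [MeasurableSpace Ω] (P : Measure Ω) [IsProbabilityMeasure P]
    (X : Ω → ℝ) (hX : Measurable X)
    (F : ℝ → ℝ) (hF : F = distFun (P.map X)) (hFcont : Continuous F)
    (T : ℝ → ℝ)
    (K : ℕ∞) (hK : 1 ≤ K) (t : ℕ → EReal)
    -- change points are strictly increasing
    (ht : ∀ k : ℕ, (k : ℕ∞) < K → t k < t (k + 1))
    -- `T` is pcsm: continuous and strictly monotone on each open piece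
    (hTcont : ∀ k : ℕ, 1 ≤ k → (k : ℕ∞) ≤ K → ContinuousOn T (pieceO t k))
    (hTmono : ∀ k : ℕ, 1 ≤ k → (k : ℕ∞) ≤ K →
      StrictMonoOn T (pieceO t k) ∨ StrictAntiOn T (pieceO t k))
    -- the support of `F_X` has infimum `t_0` and supremum `t_K`
    (hsupp0 : sInf ((fun x : ℝ => (x : EReal)) '' suppSet F) = t 0)
    (hsuppK : sSup ((fun x : ℝ => (x : EReal)) '' suppSet F)
      = ⨆ k : {k : ℕ // (k : ℕ∞) ≤ K}, t k.1)
    -- the W-transform of `F_X` and `T`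
    (W : ℝ → ℝ) (hWmeas : Measurable W)
    (hW : ∀ u ∈ Set.Ioc (0 : ℝ) 1,
      W u = distFun (P.map (fun ω => T (X ω))) (T (quantileFun F u))) :
    ∀ {Ω' : Type*} [MeasurableSpace Ω'] (P' : Measure Ω') [IsProbabilityMeasure P']
      (U : Ω' → ℝ), Measurable U → P'.map U = unif01 →
      P'.map (fun ω => W (U ω)) = unif01 := by
  
  intro Ω' _ P' _ U hU hUlaw
  classical
  have hμprob : IsProbabilityMeasure (P.map X) := Measure.isProbabilityMeasure_map hX.aemeasurable
  set μ := P.map X with hμ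
  subst hF
  haveI : NullSingletonClass μ := ⟨fun x => WAux.measure_singleton_eq_zero μ hFcont x⟩
  -- the open union of the pieces
  set Uo : Set ℝ := ⋃ k ∈ {k : ℕ | 1 ≤ k ∧ (k : ℕ∞) ≤ K}, pieceO t k with hUodef
  have hpiece_open : ∀ k : ℕ, IsOpen (pieceO t k) := by
    intro k
    have : pieceO t k = ((↑) : ℝ → EReal) ⁻¹' (Ioi (t (k-1)) ∩ Iio (t k)) := rfl
    rw [this]
    exact ((isOpen_Ioi.inter isOpen_Iio)).preimage continuous_coe_real_ereal
  have hUo_open : IsOpen Uo := isOpen_biUnion fun k _ => hpiece_open k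
  -- the complement of `Uo` is `μ`-null
  have hA_null : μ (suppSet (distFun μ))ᶜ = 0 := WAux.suppSet_compl_null μ
  have hsuppne : (suppSet (distFun μ)).Nonempty := by
    rcases eq_empty_or_nonempty (suppSet (distFun μ)) with he | h
    · exfalso
      have h1 : μ univ = 0 := by
        rw [← compl_empty, ← he]; exact hA_null
      rw [measure_univ] at h1
      exact one_ne_zero h1
    · exact h
  obtain ⟨w, hw⟩ := hsuppne
  set sK := ⨆ k : {k : ℕ // (k : ℕ∞) ≤ K}, t k.1 with hsKdef
  have hbound : ∀ x ∈ suppSet (distFun μ), t 0 ≤ (x : EReal) ∧ (x : EReal) ≤ sK := by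
    intro x hx
    have h1 : sInf ((fun x : ℝ => (x : EReal)) '' suppSet (distFun μ)) ≤ (x : EReal) :=
      sInf_le ⟨x, hx, rfl⟩
    have h2 : (x : EReal) ≤ sSup ((fun x : ℝ => (x : EReal)) '' suppSet (distFun μ)) :=
      le_sSup ⟨x, hx, rfl⟩
    rw [hsupp0] at h1
    rw [hsuppK] at h2
    exact ⟨h1, h2⟩
  have hL : μ {x : ℝ | (x : EReal) ≤ t 0} = 0 := by
    rcases eq_or_ne (t 0) ⊥ with hbot | hbot
    · have he : {x : ℝ | (x : EReal) ≤ t 0} = ∅ := by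
        ext x
        simp only [mem_setOf_eq, hbot, le_bot_iff, mem_empty_iff_false, iff_false]
        exact EReal.coe_ne_bot x
      rw [he]; exact measure_empty
    · have htop : t 0 ≠ ⊤ := by
        intro h
        have h1 := (hbound w hw).1
        rw [h] at h1
        exact EReal.coe_ne_top w (top_le_iff.1 h1)
      have hr : ((t 0).toReal : EReal) = t 0 := EReal.coe_toReal htop hbot
      have hset : {x : ℝ | (x : EReal) ≤ t 0} ⊆ {(t 0).toReal} ∪ (suppSet (distFun μ))ᶜ := by
        intro x hx
        by_cases hxs : x ∈ suppSet (distFun μ)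
        · left
          have h1 : (x : EReal) = ((t 0).toReal : EReal) :=
            le_antisymm (hr ▸ hx) (hr ▸ (hbound x hxs).1)
          exact EReal.coe_eq_coe_iff.1 h1
        · right; exact hxs
      exact measure_mono_null hset
        (measure_union_null (measure_singleton _) hA_null)
  have hR : μ {x : ℝ | sK ≤ (x : EReal)} = 0 := by
    rcases eq_or_ne sK ⊤ with htop | htop
    · have he : {x : ℝ | sK ≤ (x : EReal)} = ∅ := by
        ext x
        simp only [mem_setOf_eq, htop, top_le_iff, mem_empty_iff_false, iff_false]
        exact EReal.coe_ne_top x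
      rw [he]; exact measure_empty
    · have hbot : sK ≠ ⊥ := by
        intro h
        have h1 := (hbound w hw).2
        rw [h] at h1
        exact EReal.coe_ne_bot w (le_bot_iff.1 h1)
      have hr : (sK.toReal : EReal) = sK := EReal.coe_toReal htop hbot
      have hset : {x : ℝ | sK ≤ (x : EReal)} ⊆ {sK.toReal} ∪ (suppSet (distFun μ))ᶜ := by
        intro x hx
        by_cases hxs : x ∈ suppSet (distFun μ)
        · left
          have h1 : (x : EReal) = (sK.toReal : EReal) :=
            le_antisymm (hr ▸ (hbound x hxs).2) (hr ▸ hx)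
          exact EReal.coe_eq_coe_iff.1 h1
        · right; exact hxs
      exact measure_mono_null hset
        (measure_union_null (measure_singleton _) hA_null)
  have hCP : μ (⋃ k : ℕ, {x : ℝ | (x : EReal) = t k}) = 0 := by
    refine measure_iUnion_null fun k => ?_
    have hsub : Set.Subsingleton {x : ℝ | (x : EReal) = t k} := by
      intro a ha b hb
      exact EReal.coe_eq_coe_iff.1 (ha.trans hb.symm)
    exact hsub.countable.measure_zero μ
  have hUo_null : μ Uoᶜ = 0 := by
    have hsub : Uoᶜ ⊆ (({x : ℝ | (x : EReal) ≤ t 0} ∪ {x : ℝ | sK ≤ (x : EReal)})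
        ∪ (suppSet (distFun μ))ᶜ) ∪ (⋃ k : ℕ, {x : ℝ | (x : EReal) = t k}) := by
      intro x hx
      by_contra hmem
      simp only [mem_union, not_or] at hmem
      obtain ⟨⟨⟨hL', hR'⟩, hA'⟩, hCP'⟩ := hmem
      apply hx
      have hxs : x ∈ suppSet (distFun μ) := not_not.1 hA'
      have h0lt : t 0 < (x : EReal) := not_le.1 hL'
      have hltK : (x : EReal) < sK := not_le.1 hR'
      have hne : ∀ k : ℕ, (x : EReal) ≠ t k := by
        intro k h
        exact hCP' (mem_iUnion.2 ⟨k, h⟩)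
      rw [hsKdef, lt_iSup_iff] at hltK
      obtain ⟨⟨k₁, hk₁⟩, hxk₁⟩ := hltK
      have hex : ∃ k : ℕ, (x : EReal) < t k := ⟨k₁, hxk₁⟩
      set k₀ := Nat.find hex with hk₀def
      have hk₀spec : (x : EReal) < t k₀ := Nat.find_spec hex
      have hk₀le : k₀ ≤ k₁ := Nat.find_min' hex hxk₁
      have hk₀K : (k₀ : ℕ∞) ≤ K := le_trans (by exact_mod_cast hk₀le) hk₁
      have hk₀pos : 1 ≤ k₀ := by
        by_contra h
        push_neg at h
        interval_cases k₀
        · exact absurd hk₀spec (not_lt.2 h0lt.le)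
      have hmin : ¬ ((x : EReal) < t (k₀ - 1)) :=
        Nat.find_min hex (Nat.sub_lt (lt_of_lt_of_le Nat.zero_lt_one hk₀pos) Nat.one_pos)
      have hlow : t (k₀ - 1) < (x : EReal) :=
        lt_of_le_of_ne (not_lt.1 hmin) (Ne.symm (hne (k₀ - 1)))
      exact mem_biUnion ⟨hk₀pos, hk₀K⟩ ⟨hlow, hk₀spec⟩
    refine measure_mono_null hsub ?_
    exact measure_union_null (measure_union_null (measure_union_null hL hR) hA_null) hCP
  -- the measurable modification of `T`
  set g : ℝ → ℝ := fun x => if x ∈ Uo then T x else 0 with hgdef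
  have hgUo : ∀ x ∈ Uo, g x = T x := by
    intro x hx
    rw [hgdef]
    simp only [if_pos hx]
  have hgUo' : ∀ x, x ∉ Uo → g x = 0 := by
    intro x hx
    rw [hgdef]
    simp only [if_neg hx]
  have hg : Measurable g := by
    apply measurable_of_isOpen
    intro V hV
    have hOmeas : MeasurableSet (⋃ k ∈ {k : ℕ | 1 ≤ k ∧ (k : ℕ∞) ≤ K}, (pieceO t k ∩ T ⁻¹' V)) :=
      (isOpen_biUnion fun k hk =>
        (hTcont k hk.1 hk.2).isOpen_inter_preimage (hpiece_open k) hV).measurableSet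
    by_cases h0 : (0:ℝ) ∈ V
    · have hpre : g ⁻¹' V = (⋃ k ∈ {k : ℕ | 1 ≤ k ∧ (k : ℕ∞) ≤ K}, (pieceO t k ∩ T ⁻¹' V))
          ∪ Uoᶜ := by
        ext x
        by_cases hx : x ∈ Uo
        · simp only [mem_preimage, hgUo x hx, mem_union, mem_compl_iff, hx, not_true_eq_false,
            or_false]
          constructor
          · intro hTx
            obtain ⟨k, hk, hxk⟩ := mem_iUnion₂.1 hx
            exact mem_iUnion₂.2 ⟨k, hk, hxk, hTx⟩
          · intro h
            obtain ⟨k, hk, hxk, hTx⟩ := mem_iUnion₂.1 h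
            exact hTx
        · simp only [mem_preimage, hgUo' x hx, mem_union, mem_compl_iff, hx, not_false_iff,
            or_true, iff_true]
          exact h0
      rw [hpre]
      exact hOmeas.union hUo_open.measurableSet.compl
    · have hpre : g ⁻¹' V = ⋃ k ∈ {k : ℕ | 1 ≤ k ∧ (k : ℕ∞) ≤ K}, (pieceO t k ∩ T ⁻¹' V) := by
        ext x
        by_cases hx : x ∈ Uo
        · simp only [mem_preimage, hgUo x hx]
          constructor
          · intro hTx
            obtain ⟨k, hk, hxk⟩ := mem_iUnion₂.1 hx
            exact mem_iUnion₂.2 ⟨k, hk, hxk, hTx⟩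
          · intro h
            obtain ⟨k, hk, hxk, hTx⟩ := mem_iUnion₂.1 h
            exact hTx
        · simp only [mem_preimage, hgUo' x hx]
          constructor
          · intro h
            exact absurd h h0
          · intro h
            obtain ⟨k, hk, hxk, -⟩ := mem_iUnion₂.1 h
            exact absurd (mem_biUnion hk hxk) hx
      rw [hpre]
      exact hOmeas
  set ν := μ.map g with hνdef
  haveI : IsProbabilityMeasure ν := Measure.isProbabilityMeasure_map hg.aemeasurable
  have hXUo : ∀ᵐ ω ∂P, X ω ∈ Uo := by
    have h0 : P (X ⁻¹' Uoᶜ) = 0 := by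
      rw [← Measure.map_apply hX hUo_open.measurableSet.compl]
      exact hUo_null
    filter_upwards [measure_eq_zero_iff_ae_notMem.1 h0] with ω hω
    exact not_not.1 hω
  have hmapT : P.map (fun ω => T (X ω)) = ν := by
    have h1 : (fun ω => T (X ω)) =ᵐ[P] (fun ω => g (X ω)) := by
      filter_upwards [hXUo] with ω hω
      rw [hgdef]
      simp only [if_pos hω]
    rw [Measure.map_congr h1, hνdef, hμ]
    have h2 := Measure.map_map hg hX (μ := P)
    rw [Function.comp_def] at h2
    exact h2.symm
  have hν_atoms : ∀ y, ν {y} = 0 := by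
    intro y
    rw [hνdef, Measure.map_apply hg (measurableSet_singleton y)]
    have hsub : g ⁻¹' {y} ⊆
        (⋃ k ∈ {k : ℕ | 1 ≤ k ∧ (k : ℕ∞) ≤ K}, (pieceO t k ∩ T ⁻¹' {y})) ∪ Uoᶜ := by
      intro x hx
      by_cases hxo : x ∈ Uo
      · left
        obtain ⟨k, hk, hxk⟩ := mem_iUnion₂.1 hxo
        refine mem_iUnion₂.2 ⟨k, hk, hxk, ?_⟩
        show T x ∈ ({y} : Set ℝ)
        rw [← hgUo x hxo]
        exact hx
      · right; exact hxo
    refine measure_mono_null hsub (measure_union_null ?_ hUo_null)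
    refine measure_iUnion_null fun k => measure_iUnion_null fun hk => ?_
    have hss : Set.Subsingleton (pieceO t k ∩ T ⁻¹' {y}) := by
      rcases hTmono k hk.1 hk.2 with hm | hm
      · intro a ha b hb
        have h1 : T a = y := ha.2
        have h2 : T b = y := hb.2
        exact hm.injOn ha.1 hb.1 (h1.trans h2.symm)
      · intro a ha b hb
        have h1 : T a = y := ha.2
        have h2 : T b = y := hb.2
        exact hm.injOn ha.1 hb.1 (h1.trans h2.symm)
    exact hss.countable.measure_zero μ
  have hGcont : Continuous (distFun ν) := WAux.continuous_distFun ν hν_atoms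
  have hQ'meas := WAux.quantMod_measurable μ hFcont
  have hQ'map := WAux.map_quantMod μ hFcont
  have hcomp : P'.map (fun ω => W (U ω)) = unif01.map W := by
    have h2 := Measure.map_map hWmeas hU (μ := P')
    rw [Function.comp_def] at h2
    rw [← h2, hUlaw]
  rw [hcomp]
  have hQUo : ∀ᵐ u ∂unif01, WAux.quantMod μ u ∈ Uo := by
    have h0 : unif01 (WAux.quantMod μ ⁻¹' Uoᶜ) = 0 := by
      rw [← Measure.map_apply hQ'meas hUo_open.measurableSet.compl, hQ'map]
      exact hUo_null
    filter_upwards [measure_eq_zero_iff_ae_notMem.1 h0] with u hu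
    exact not_not.1 hu
  have h1mem : ∀ᵐ u ∂unif01, u ∈ Ioc (0:ℝ) 1 := ae_restrict_mem measurableSet_Ioc
  have hne1 : ∀ᵐ u ∂unif01, u ≠ 1 := by
    have h0 : unif01 {(1:ℝ)} = 0 := by
      rw [WAux.unif01_apply _ (measurableSet_singleton 1)]
      exact measure_mono_null inter_subset_left (measure_singleton 1)
    filter_upwards [measure_eq_zero_iff_ae_notMem.1 h0] with u hu
    exact fun h => hu (mem_singleton_iff.2 h)
  have hae : W =ᵐ[unif01] fun u => distFun ν (g (WAux.quantMod μ u)) := by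
    filter_upwards [hQUo, h1mem, hne1] with u hu1 hu2 hu3
    have huIoo : u ∈ Ioo (0:ℝ) 1 := ⟨hu2.1, lt_of_le_of_ne hu2.2 hu3⟩
    have hQeq : WAux.quantMod μ u = quantileFun (distFun μ) u :=
      Set.piecewise_eq_of_mem _ _ _ huIoo
    have hgq : g (WAux.quantMod μ u) = T (WAux.quantMod μ u) := by
      rw [hgdef]; simp only [if_pos hu1]
    rw [hW u hu2, hmapT, hgq, hQeq]
  rw [Measure.map_congr hae]
  have hsplit : (fun u => distFun ν (g (WAux.quantMod μ u)))
      = (distFun ν ∘ g) ∘ WAux.quantMod μ := rfl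
  rw [hsplit, ← Measure.map_map (hGcont.measurable.comp hg) hQ'meas, hQ'map,
    ← Measure.map_map hGcont.measurable hg, ← hνdef]
  exact WAux.map_distFun_eq_unif01 ν hGcont
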